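/- arXiv:1703.01064 — 2 statements merged into one kernel-verified Lean document; each statement's English description precedes it below -/
import Mathlib

section
/- Let g(x) = (ax+b)/(cx+d) with real coefficients, c ≠ 0, ad − bc = 1, and −2 < a + d < 2, and suppose the conjugate rotation h ∘ g ∘ h⁻¹ of the unit circle (where h(x) = (x − α)/(x − ᾱ) and α is a non-real fixed point of g) is an irrational rotation. Then for any b₀ ∈ ℝ, either gᵏ(b₀) = ∞ for some k ∈ ℕ, or the solution sequence b_{n+1} = g(b_n) has no Hyers-Ulam stability on ℝ. -/
open OnePoint Complex

open Classical in
/-- The Möbius map `z ↦ (az+b)/(cz+d)` as a self-map of the one-point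
compactification (Riemann sphere for `K = ℂ`, extended real line for `K = ℝ`). -/
noncomputable def mob {K : Type*} [Field K] (a b c d : K) : OnePoint K → OnePoint K :=
  fun z => Option.rec (motive := fun _ => OnePoint K)
    (if c = 0 then (∞ : OnePoint K) else ((a / c : K) : OnePoint K))
    (fun w => if c * w + d = 0 then (∞ : OnePoint K)
      else (((a * w + b) / (c * w + d) : K) : OnePoint K)) z

open Classical in
lemma mob_coe {K : Type*} [Field K] (a b c d : K) (w : K) :
    mob a b c d (w : OnePoint K) =
      if c * w + d = 0 then (∞ : OnePoint K) else (((a * w + b) / (c * w + d) : K) : OnePoint K) :=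
  rfl

lemma mob_coe' {K : Type*} [Field K] (a b c d : K) (w : K) (h : c * w + d ≠ 0) :
    mob a b c d (w : OnePoint K) = (((a * w + b) / (c * w + d) : K) : OnePoint K) := by
  rw [mob_coe, if_neg h]

lemma rot_dense (θ : ℝ) (hirr : Irrational (θ / (2 * Real.pi))) (t ε : ℝ) (hε : 0 < ε) :
    ∃ n : ℕ, ∃ j : ℤ, |(n : ℝ) * θ - t - 2 * Real.pi * j| < ε := by
  have hπ : (0:ℝ) < Real.pi := Real.pi_pos
  have h2π : (0:ℝ) < 2 * Real.pi := by positivity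
  have hdense : Dense ((AddSubgroup.closure ({θ, 2 * Real.pi} : Set ℝ) : AddSubgroup ℝ) : Set ℝ) := by
    rcases AddSubgroup.dense_or_cyclic (AddSubgroup.closure ({θ, 2 * Real.pi} : Set ℝ)) with h | ⟨g, hg⟩
    · exact h
    · exfalso
      have hθ : θ ∈ AddSubgroup.closure ({θ, 2 * Real.pi} : Set ℝ) :=
        AddSubgroup.subset_closure (by simp)
      have h2 : 2 * Real.pi ∈ AddSubgroup.closure ({θ, 2 * Real.pi} : Set ℝ) :=
        AddSubgroup.subset_closure (by simp)
      rw [hg, AddSubgroup.mem_closure_singleton] at hθ h2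
      obtain ⟨m, hm⟩ := hθ
      obtain ⟨k, hk⟩ := h2
      have hg0 : g ≠ 0 := by
        rintro rfl; simp at hk
      have hk0 : (k : ℝ) ≠ 0 := by
        rintro hk0; rw [zsmul_eq_mul, hk0] at hk; nlinarith
      apply hirr
      refine ⟨(m : ℚ) / (k : ℚ), ?_⟩
      rw [zsmul_eq_mul] at hm hk
      push_cast
      rw [← hm, ← hk, mul_div_mul_right _ _ hg0]
  set ε' := min ε Real.pi with hε'def
  have hε'pos : 0 < ε' := lt_min hε hπ
  have hε'le : ε' ≤ ε := min_le_left _ _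
  have hε'pi : ε' ≤ Real.pi := min_le_right _ _
  obtain ⟨x, hxS, hx0, hxε⟩ : ∃ x ∈ (AddSubgroup.closure ({θ, 2 * Real.pi} : Set ℝ) : Set ℝ),
      0 < x ∧ x < ε' := by
    obtain ⟨x, hxS, hxU⟩ := hdense.exists_mem_open isOpen_Ioo
      (Set.nonempty_Ioo.2 hε'pos)
    exact ⟨x, hxS, hxU.1, hxU.2⟩
  have hxmem : x ∈ AddSubgroup.closure ({θ} ∪ {2 * Real.pi} : Set ℝ) := by
    rw [Set.singleton_union]; exact hxS
  rw [AddSubgroup.closure_union, AddSubgroup.mem_sup] at hxmem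
  obtain ⟨y, hy, z, hz, hyz⟩ := hxmem
  rw [AddSubgroup.mem_closure_singleton] at hy hz
  obtain ⟨m, rfl⟩ := hy
  obtain ⟨k, rfl⟩ := hz
  rw [zsmul_eq_mul, zsmul_eq_mul] at hyz
  obtain ⟨p, kk, hp, hs0, hsε⟩ : ∃ (p : ℕ) (kk : ℤ), 1 ≤ p ∧
      0 < |(p : ℝ) * θ - 2 * Real.pi * kk| ∧ |(p : ℝ) * θ - 2 * Real.pi * kk| < ε := by
    rcases lt_trichotomy m 0 with hm | hm | hm
    · obtain ⟨p, hpm⟩ : ∃ p : ℕ, (p : ℤ) = -m := ⟨(-m).toNat, Int.toNat_of_nonneg (by omega)⟩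
      have hpR : (p : ℝ) = -(m : ℝ) := by exact_mod_cast congrArg (Int.cast : ℤ → ℝ) hpm
      have hval : (p : ℝ) * θ - 2 * Real.pi * k = -x := by rw [hpR]; linarith
      refine ⟨p, k, by omega, ?_, ?_⟩
      · rw [hval]; simpa using hx0.ne'
      · rw [hval, abs_neg, abs_of_pos hx0]; linarith
    · exfalso
      subst hm
      simp only [Int.cast_zero, zero_mul, zero_add] at hyz
      have hk1 : 1 ≤ k := by
        by_contra h
        push_neg at h
        have : (k : ℝ) ≤ 0 := by exact_mod_cast (by omega : k ≤ 0)
        nlinarith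
      have : (1 : ℝ) ≤ (k : ℝ) := by exact_mod_cast hk1
      nlinarith
    · obtain ⟨p, hpm⟩ : ∃ p : ℕ, (p : ℤ) = m := ⟨m.toNat, Int.toNat_of_nonneg (by omega)⟩
      have hpR : (p : ℝ) = (m : ℝ) := by exact_mod_cast congrArg (Int.cast : ℤ → ℝ) hpm
      have hval : (p : ℝ) * θ - 2 * Real.pi * ((-k : ℤ) : ℝ) = x := by
        push_cast; rw [hpR]; linarith
      refine ⟨p, -k, by omega, ?_, ?_⟩
      · rw [hval]; simpa using hx0.ne'
      · rw [hval, abs_of_pos hx0]; linarith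
  set s := (p : ℝ) * θ - 2 * Real.pi * kk with hsdef
  set F := ⌊t / (2 * Real.pi)⌋ with hF
  set t' := t - 2 * Real.pi * F with ht'
  have ht'0 : 0 ≤ t' := by
    have h1 : 2 * Real.pi * (F : ℝ) ≤ 2 * Real.pi * (t / (2 * Real.pi)) :=
      mul_le_mul_of_nonneg_left (Int.floor_le _) (le_of_lt h2π)
    rw [mul_div_cancel₀ _ h2π.ne'] at h1
    rw [ht']; linarith
  have ht'2 : t' < 2 * Real.pi := by
    have h1 : 2 * Real.pi * (t / (2 * Real.pi)) < 2 * Real.pi * ((F : ℝ) + 1) :=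
      mul_lt_mul_of_pos_left (Int.lt_floor_add_one _) h2π
    rw [mul_div_cancel₀ _ h2π.ne'] at h1
    rw [ht']; linarith
  rcases (abs_pos.mp hs0).lt_or_gt with hsneg | hspos
  · -- s < 0
    have hq : 0 ≤ (t' - 2 * Real.pi) / s :=
      div_nonneg_iff.mpr (Or.inr ⟨by linarith, by linarith⟩)
    obtain ⟨m', hm'⟩ : ∃ m' : ℕ, (m' : ℤ) = ⌈(t' - 2 * Real.pi) / s⌉ :=
      ⟨_, Int.toNat_of_nonneg (Int.ceil_nonneg hq)⟩
    have hmval : (m' : ℝ) = (⌈(t' - 2 * Real.pi) / s⌉ : ℤ) := by exact_mod_cast hm'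
    refine ⟨m' * p, m' * kk - F - 1, ?_⟩
    have hns : ((m' * p : ℕ) : ℝ) * θ - t - 2 * Real.pi * ((m' * kk - F - 1 : ℤ) : ℝ)
        = (m' : ℝ) * s - (t' - 2 * Real.pi) := by
      push_cast
      rw [hsdef, ht']
      ring
    rw [hns]
    have hceil1 : (t' - 2 * Real.pi) / s ≤ (m' : ℝ) := by
      rw [hmval]; exact_mod_cast Int.le_ceil _
    have hceil2 : (m' : ℝ) < (t' - 2 * Real.pi) / s + 1 := by
      rw [hmval]; exact_mod_cast Int.ceil_lt_add_one _
    have hub : (m' : ℝ) * s ≤ t' - 2 * Real.pi := by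
      have := mul_le_mul_of_nonpos_right hceil1 (le_of_lt hsneg)
      rwa [div_mul_cancel₀ _ (ne_of_lt hsneg)] at this
    have hlb : t' - 2 * Real.pi + s < (m' : ℝ) * s := by
      have := mul_lt_mul_of_neg_right hceil2 hsneg
      rwa [add_mul, one_mul, div_mul_cancel₀ _ (ne_of_lt hsneg)] at this
    rw [_root_.abs_of_nonpos (by linarith)]
    have habs : |s| = -s := _root_.abs_of_neg hsneg
    linarith
  · -- 0 < s
    have hq : 0 ≤ t' / s := div_nonneg ht'0 (le_of_lt hspos)
    obtain ⟨m', hm'⟩ : ∃ m' : ℕ, (m' : ℤ) = ⌈t' / s⌉ :=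
      ⟨_, Int.toNat_of_nonneg (Int.ceil_nonneg hq)⟩
    have hmval : (m' : ℝ) = (⌈t' / s⌉ : ℤ) := by exact_mod_cast hm'
    refine ⟨m' * p, m' * kk - F, ?_⟩
    have hns : ((m' * p : ℕ) : ℝ) * θ - t - 2 * Real.pi * ((m' * kk - F : ℤ) : ℝ)
        = (m' : ℝ) * s - t' := by
      push_cast
      rw [hsdef, ht']
      ring
    rw [hns]
    have hceil1 : t' / s ≤ (m' : ℝ) := by
      rw [hmval]; exact_mod_cast Int.le_ceil _
    have hceil2 : (m' : ℝ) < t' / s + 1 := by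
      rw [hmval]; exact_mod_cast Int.ceil_lt_add_one _
    have hlb : t' ≤ (m' : ℝ) * s := by
      have := mul_le_mul_of_nonneg_right hceil1 (le_of_lt hspos)
      rwa [div_mul_cancel₀ _ (ne_of_gt hspos)] at this
    have hub : (m' : ℝ) * s < t' + s := by
      have := mul_lt_mul_of_pos_right hceil2 hspos
      rwa [add_mul, one_mul, div_mul_cancel₀ _ (ne_of_gt hspos)] at this
    rw [_root_.abs_of_nonneg (by linarith)]
    have habs : |s| = s := _root_.abs_of_pos hspos
    linarith

/-- `g` real elliptic (`c ≠ 0`, `ad - bc = 1`, `-2 < a + d < 2`), `α` a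
non-real fixed point, and the conjugate `h ∘ g ∘ h⁻¹`, `h(z) = (z - α)/(z - ᾱ)`, is an
irrational rotation `z ↦ e^{iθ} z`. Then for any `b₀ ∈ ℝ`, either `gᵏ(b₀) = ∞` for some
`k ≥ 1`, or the solution of `b_{n+1} = g(b_n)` starting at `b₀` has no Hyers-Ulam
stability: some `ε`-approximate solution stays at unbounded distance from it. -/
theorem stmt7 (a b c d : ℝ) (hc : c ≠ 0) (hdet : a * d - b * c = 1)
    (h1 : -2 < a + d) (h2 : a + d < 2) (α : ℂ) (him : α.im ≠ 0)
    (hα : (c : ℂ) * α ^ 2 - ((a : ℂ) - (d : ℂ)) * α - (b : ℂ) = 0)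
    (θ : ℝ) (hirr : Irrational (θ / (2 * Real.pi)))
    (hconj : ∀ z : OnePoint ℂ,
      mob 1 (-α) 1 (-(starRingEnd ℂ α)) (mob (a : ℂ) (b : ℂ) (c : ℂ) (d : ℂ) z) =
        mob (Complex.exp ((θ : ℂ) * Complex.I)) 0 0 1
          (mob 1 (-α) 1 (-(starRingEnd ℂ α)) z))
    (b₀ : ℝ) :
    (∃ k : ℕ, 1 ≤ k ∧ (mob a b c d)^[k] ((b₀ : OnePoint ℝ)) = ∞) ∨
    (∃ ε > (0 : ℝ), ∃ aseq : ℕ → ℝ,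
      (∀ n : ℕ, |aseq (n + 1) - (a * aseq n + b) / (c * aseq n + d)| ≤ ε) ∧
      ∀ M : ℝ, ∃ n : ℕ, ∃ w : ℝ,
        (mob a b c d)^[n] ((b₀ : OnePoint ℝ)) = (w : OnePoint ℝ) ∧ M < |aseq n - w|) := by
  by_cases hinf : ∃ k : ℕ, 1 ≤ k ∧ (mob a b c d)^[k] ((b₀ : OnePoint ℝ)) = ∞
  · exact Or.inl hinf
  right
  push_neg at hinf
  -- the real orbit
  have horb : ∀ n : ℕ, ∃ w : ℝ, (mob a b c d)^[n] ((b₀ : OnePoint ℝ)) = (w : OnePoint ℝ) := by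
    intro n
    cases n with
    | zero => exact ⟨b₀, rfl⟩
    | succ n =>
      have h := hinf (n + 1) (by omega)
      cases hv : (mob a b c d)^[n + 1] ((b₀ : OnePoint ℝ)) with
      | infty => exact absurd hv h
      | coe v => exact ⟨v, rfl⟩
  choose w hw using horb
  have hcwd : ∀ n, c * w n + d ≠ 0 := by
    intro n hzero
    have h1 : (mob a b c d)^[n + 1] ((b₀ : OnePoint ℝ)) = ∞ := by
      rw [Function.iterate_succ_apply', hw n, mob_coe, if_pos hzero]
    exact hinf (n + 1) (by omega) h1
  have hrec : ∀ n, w (n + 1) = (a * w n + b) / (c * w n + d) := by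
    intro n
    have h1 : (mob a b c d)^[n + 1] ((b₀ : OnePoint ℝ))
        = (((a * w n + b) / (c * w n + d) : ℝ) : OnePoint ℝ) := by
      rw [Function.iterate_succ_apply', hw n, mob_coe' _ _ _ _ _ (hcwd n)]
    rw [hw (n + 1)] at h1
    exact OnePoint.coe_eq_coe.mp h1
  -- the complex picture
  have hdenne : ∀ x : ℝ, (x : ℂ) - (starRingEnd ℂ) α ≠ 0 := by
    intro x h
    have h' := congrArg Complex.im h
    simp [Complex.sub_im, Complex.conj_im] at h'
    exact him h'
  have hnumne : ∀ x : ℝ, (x : ℂ) - α ≠ 0 := by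
    intro x h
    have h' := congrArg Complex.im h
    simp [Complex.sub_im] at h'
    exact him h'
  set e : ℂ := Complex.exp ((θ : ℂ) * Complex.I) with he
  set u : ℕ → ℂ := fun n => ((w n : ℂ) - α) / ((w n : ℂ) - (starRingEnd ℂ) α) with hu
  have hkey : ∀ n, u (n + 1) = e * u n := by
    intro n
    have h := hconj ((w n : ℂ) : OnePoint ℂ)
    have hcwdC : (c : ℂ) * ((w n : ℝ) : ℂ) + (d : ℂ) ≠ 0 := by
      intro h0
      apply hcwd n
      have h0' : ((c * w n + d : ℝ) : ℂ) = 0 := by push_cast; linear_combination h0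
      exact_mod_cast h0'
    rw [mob_coe' _ _ _ _ _ hcwdC] at h
    have hstep : ((a : ℂ) * ((w n : ℝ) : ℂ) + (b : ℂ)) / ((c : ℂ) * ((w n : ℝ) : ℂ) + (d : ℂ))
        = ((w (n + 1) : ℝ) : ℂ) := by
      rw [hrec n]
      push_cast
      ring
    rw [hstep] at h
    have hd1 : (1 : ℂ) * ((w (n + 1) : ℝ) : ℂ) + -((starRingEnd ℂ) α) ≠ 0 := by
      rw [one_mul, ← sub_eq_add_neg]; exact hdenne _
    have hd2 : (1 : ℂ) * ((w n : ℝ) : ℂ) + -((starRingEnd ℂ) α) ≠ 0 := by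
      rw [one_mul, ← sub_eq_add_neg]; exact hdenne _
    rw [mob_coe' _ _ _ _ _ hd1, mob_coe' _ _ _ _ _ hd2] at h
    have hd3 : (0 : ℂ) * ((1 * ((w n : ℝ) : ℂ) + -α) / (1 * ((w n : ℝ) : ℂ) + -((starRingEnd ℂ) α)))
        + 1 ≠ 0 := by
      rw [zero_mul, zero_add]; exact one_ne_zero
    rw [mob_coe' _ _ _ _ _ hd3] at h
    have h' := OnePoint.coe_eq_coe.mp h
    rw [zero_mul, zero_add, add_zero, div_one] at h'
    simp only [hu, one_mul, ← sub_eq_add_neg] at h' ⊢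
    exact h'
  have hun : ∀ n, u n = e ^ n * u 0 := by
    intro n
    induction n with
    | zero => simp
    | succ n ih => rw [hkey n, ih, pow_succ]; ring
  have habse : ‖e‖ = 1 := Complex.norm_exp_ofReal_mul_I θ
  have hu0abs : ‖u 0‖ = 1 := by
    have hconjnum : (starRingEnd ℂ) ((w 0 : ℂ) - α) = (w 0 : ℂ) - (starRingEnd ℂ) α := by
      simp [map_sub, Complex.conj_ofReal]
    rw [hu]
    simp only
    rw [norm_div, ← hconjnum, Complex.norm_conj]
    exact div_self (norm_ne_zero_iff.mpr (hnumne (w 0)))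
  have hu0exp : u 0 = Complex.exp ((Complex.arg (u 0) : ℂ) * Complex.I) := by
    conv_lhs => rw [← Complex.norm_mul_exp_arg_mul_I (u 0)]
    rw [hu0abs]
    simp
  set τ := Complex.arg (u 0) with hτ
  refine ⟨|(a * 0 + b) / (c * 0 + d)| + 1, by positivity, fun _ => 0, ?_, ?_⟩
  · intro n
    simp only
    rw [zero_sub, abs_neg]
    linarith [abs_nonneg ((a * 0 + b) / (c * 0 + d))]
  intro M
  set A := ‖α - (starRingEnd ℂ) α‖ with hA
  have hApos : 0 < A := by
    rw [hA]
    apply norm_pos_iff.mpr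
    intro h0
    rw [sub_eq_zero] at h0
    exact him (Complex.conj_eq_iff_im.mp h0.symm)
  set B := ‖(starRingEnd ℂ) α‖ with hB
  have hBnn : 0 ≤ B := norm_nonneg _
  set δ₀ := A / (B + |M| + 1) with hδ₀
  have hMnn : 0 ≤ |M| := abs_nonneg M
  have hδ₀pos : 0 < δ₀ := div_pos hApos (by positivity)
  set ε₁ := min (δ₀ / 2) (1 / 2) with hε₁
  have hε₁pos : 0 < ε₁ := lt_min (by linarith) (by norm_num)
  obtain ⟨n, j, hnj⟩ := rot_dense θ hirr (-τ) ε₁ hε₁pos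
  refine ⟨n, w n, hw n, ?_⟩
  set x := (n : ℝ) * θ - (-τ) - 2 * Real.pi * j with hx
  have hun2 : u n = Complex.exp ((x : ℂ) * Complex.I) := by
    have h1 : u n = Complex.exp ((((n : ℝ) * θ + τ : ℝ) : ℂ) * Complex.I) := by
      rw [hun n, hu0exp, he, ← Complex.exp_nat_mul, ← Complex.exp_add]
      congr 1
      push_cast
      ring
    rw [h1]
    have h2 : ((((n : ℝ) * θ + τ : ℝ)) : ℂ) * Complex.I
        = (x : ℂ) * Complex.I + (j : ℂ) * (2 * (Real.pi : ℂ) * Complex.I) := by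
      rw [hx]
      push_cast
      ring
    rw [h2, Complex.exp_add, Complex.exp_int_mul_two_pi_mul_I, mul_one]
  have hxlt : |x| < ε₁ := hnj
  have hr : ‖(1 - u n)‖ ≤ δ₀ := by
    have h1 : ‖((x : ℂ) * Complex.I)‖ = |x| := by
      rw [norm_mul, Complex.norm_I, mul_one, Complex.norm_real, Real.norm_eq_abs]
    have h2 : ‖(Complex.exp ((x : ℂ) * Complex.I) - 1)‖ ≤ 2 * |x| := by
      have h3 : ‖((x : ℂ) * Complex.I)‖ ≤ 1 := by
        rw [h1]
        have : ε₁ ≤ 1 / 2 := min_le_right _ _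
        linarith
      have := Complex.norm_exp_sub_one_le h3
      rwa [h1] at this
    have h4 : ‖(1 - u n)‖ = ‖(Complex.exp ((x : ℂ) * Complex.I) - 1)‖ := by
      rw [hun2, norm_sub_rev]
    have h5 : ε₁ ≤ δ₀ / 2 := min_le_left _ _
    rw [h4]
    linarith
  have hdiv : ((w n : ℂ) - α) = u n * ((w n : ℂ) - (starRingEnd ℂ) α) := by
    rw [hu]
    simp only
    rw [div_mul_cancel₀ _ (hdenne (w n))]
  have hWn : ((w n : ℂ)) * (1 - u n) = α - u n * (starRingEnd ℂ) α := by
    linear_combination hdiv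
  have habs_eq : ‖((w n : ℂ))‖ * ‖(1 - u n)‖
      = ‖(α - u n * (starRingEnd ℂ) α)‖ := by
    rw [← norm_mul]
    exact congrArg _ hWn
  have htr : A ≤ ‖(α - u n * (starRingEnd ℂ) α)‖ + ‖(1 - u n)‖ * B := by
    have hid : α - (starRingEnd ℂ) α
        = (α - u n * (starRingEnd ℂ) α) + (-((1 - u n) * (starRingEnd ℂ) α)) := by ring
    calc A = ‖((α - u n * (starRingEnd ℂ) α) + (-((1 - u n) * (starRingEnd ℂ) α)))‖ := by
            rw [hA, ← hid]
      _ ≤ ‖(α - u n * (starRingEnd ℂ) α)‖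
            + ‖(-((1 - u n) * (starRingEnd ℂ) α))‖ := norm_add_le _ _
      _ = ‖(α - u n * (starRingEnd ℂ) α)‖ + ‖(1 - u n)‖ * B := by
            rw [hB, norm_neg, norm_mul]
  set r := ‖(1 - u n)‖ with hrdef
  have hrpos : 0 < r := by
    rcases eq_or_lt_of_le (norm_nonneg (1 - u n)) with h | h
    · exfalso
      have hr0 : r = 0 := h.symm
      have h0 : ‖(α - u n * (starRingEnd ℂ) α)‖ = 0 := by
        rw [← habs_eq, hr0, mul_zero]
      rw [h0, hr0] at htr
      norm_num at htr
      linarith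
    · exact h
  have hAeq : δ₀ * (B + |M| + 1) = A := by
    rw [hδ₀]
    field_simp
  have hwabs : ‖((w n : ℂ))‖ = |w n| := by rw [Complex.norm_real, Real.norm_eq_abs]
  have hstep1 : (|M| + 1) * r ≤ |w n| * r := by
    have hAr : A - r * B ≤ |w n| * r := by
      rw [← hwabs]
      linarith [htr, habs_eq]
    nlinarith [hr, hrpos, hAeq]
  have hfin : |M| + 1 ≤ |w n| := le_of_mul_le_mul_right hstep1 hrpos
  rw [zero_sub, abs_neg]
  have : M ≤ |M| := le_abs_self M
  linarith
end

section
/- Let f be an elliptic Möbius map with fixed points α, β, conjugate via h(z) = (z − β)/(z − α) to an irrational rotation z ↦ e^{iθ}z. If b₀ ∈ ℂ does not lie on the invariant extended line h⁻¹(S¹) and b₀ ∉ {α, β}, then the orbit {fⁿ(b₀) : n ∈ ℕ} is dense in the circle h⁻¹(C_r), where r = |h(b₀)| ≠ 0, 1, and this circle has positive distance from the invariant line ℓ = h⁻¹(S¹) \ {∞}. -/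
open OnePoint Complex

section Stmt19Aux

lemma mob_coe_ne (a b c d w : ℂ) (h : c * w + d ≠ 0) :
    mob a b c d (w : OnePoint ℂ) = (((a * w + b) / (c * w + d) : ℂ) : OnePoint ℂ) := by
  show (if c * w + d = 0 then (∞ : OnePoint ℂ) else _) = _
  rw [if_neg h]

lemma mob_coe_eq (a b c d w : ℂ) (h : c * w + d = 0) :
    mob a b c d (w : OnePoint ℂ) = (∞ : OnePoint ℂ) := by
  show (if c * w + d = 0 then (∞ : OnePoint ℂ) else _) = _
  rw [if_pos h]

lemma mob_infty_ne (a b c d : ℂ) (h : c ≠ 0) :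
    mob a b c d (∞ : OnePoint ℂ) = ((a / c : ℂ) : OnePoint ℂ) := by
  show (if c = 0 then (∞ : OnePoint ℂ) else _) = _
  rw [if_neg h]

lemma exp_zsmul' (m : ℤ) (x : ℝ) : Circle.exp (m • x) = Circle.exp x ^ m := by
  have := map_zsmul Circle.expHom m x
  simpa using congrArg Additive.toMul this

lemma dense_pow_circle {θ : ℝ} (hirr : Irrational (θ / (2 * Real.pi))) :
    DenseRange (fun n : ℕ => Circle.exp θ ^ n) := by
  have h2π : (2 * Real.pi) ≠ 0 := by positivity
  have hS : Dense ((AddSubgroup.closure ({θ, 2 * Real.pi} : Set ℝ) : AddSubgroup ℝ) : Set ℝ) := by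
    rcases AddSubgroup.dense_or_cyclic
        (AddSubgroup.closure ({θ, 2 * Real.pi} : Set ℝ)) with h | ⟨g, hg⟩
    · exact h
    · exfalso
      have hθ : θ ∈ AddSubgroup.closure ({θ, 2 * Real.pi} : Set ℝ) :=
        AddSubgroup.subset_closure (by simp)
      have hπ : 2 * Real.pi ∈ AddSubgroup.closure ({θ, 2 * Real.pi} : Set ℝ) :=
        AddSubgroup.subset_closure (by simp)
      rw [hg, AddSubgroup.mem_closure_singleton] at hθ hπ
      obtain ⟨m, hm⟩ := hθ
      obtain ⟨n, hn⟩ := hπ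
      have hg0 : g ≠ 0 := by rintro rfl; simp at hn
      have hn0 : (n : ℝ) ≠ 0 := by
        rintro h; rw [zsmul_eq_mul, h, zero_mul] at hn; exact h2π hn.symm
      apply Rat.not_irrational ((m : ℚ) / (n : ℚ))
      have : θ / (2 * Real.pi) = ((m : ℝ) * g) / ((n : ℝ) * g) := by
        rw [← hm, ← hn]; push_cast [zsmul_eq_mul]; ring_nf
      rw [mul_div_mul_right _ _ hg0] at this
      have h2 : ((((m : ℚ)) / (n : ℚ) : ℚ) : ℝ) = (m : ℝ) / (n : ℝ) := by push_cast; ring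
      rwa [this, ← h2] at hirr
  have hsurj : Function.Surjective (⇑Circle.exp) := fun z => ⟨_, Circle.exp_arg z⟩
  have hd : Dense (⇑Circle.exp '' (AddSubgroup.closure ({θ, 2 * Real.pi} : Set ℝ) : Set ℝ)) :=
    hsurj.denseRange.dense_image Circle.exp.continuous hS
  have hsub : (⇑Circle.exp '' (AddSubgroup.closure ({θ, 2 * Real.pi} : Set ℝ) : Set ℝ)) ⊆
      Set.range (fun m : ℤ => Circle.exp θ ^ m) := by
    rintro _ ⟨x, hx, rfl⟩
    rw [SetLike.mem_coe, AddSubgroup.mem_closure_pair] at hx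
    obtain ⟨m, n, rfl⟩ := hx
    refine ⟨m, ?_⟩
    rw [Circle.exp_add, exp_zsmul', exp_zsmul', Circle.exp_two_pi, one_zpow, mul_one]
  have : DenseRange (fun m : ℤ => Circle.exp θ ^ m) := hd.mono hsub
  exact denseRange_zpow_iff_pow.mp this

lemma dense_orbit_sphere {θ : ℝ} (hirr : Irrational (θ / (2 * Real.pi)))
    (w₀ : ℂ) (hw₀ : w₀ ≠ 0) (v : ℂ) (hv : ‖v‖ = ‖w₀‖) :
    v ∈ closure {z : ℂ | ∃ n : ℕ, 1 ≤ n ∧ z = Complex.exp ((θ : ℂ) * Complex.I) ^ n * w₀} := by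
  set g := Circle.exp θ with hg
  have habs : ‖v / w₀‖ = 1 := by
    rw [norm_div, hv, div_self (by simpa using hw₀)]
  have hmem : v / w₀ ∈ Submonoid.unitSphere ℂ := by
    simpa [Submonoid.unitSphere] using habs
  set u : Circle := ⟨v / w₀, hmem⟩ with hu
  have hd : Dense (Set.range fun n : ℕ => g ^ (n + 1)) := by
    have h0 : Dense (Set.range fun n : ℕ => g ^ n) := dense_pow_circle hirr
    have : Set.range (fun n : ℕ => g ^ (n + 1)) =
        (fun x => g * x) '' Set.range (fun n : ℕ => g ^ n) := by
      ext z
      constructor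
      · rintro ⟨n, rfl⟩; exact ⟨g ^ n, ⟨n, rfl⟩, (pow_succ' g n).symm⟩
      · rintro ⟨_, ⟨n, rfl⟩, rfl⟩; exact ⟨n, pow_succ' g n⟩
    rw [this]
    exact ((Homeomorph.mulLeft g).surjective.denseRange.dense_image
      (continuous_mul_left g) h0)
  have hucl : u ∈ closure (Set.range fun n : ℕ => g ^ (n + 1)) := hd _
  have hc : Continuous (fun x : Circle => w₀ * (x : ℂ)) :=
    continuous_const.mul continuous_subtype_val
  have hmaps : Set.MapsTo (fun x : Circle => w₀ * (x : ℂ))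
      (Set.range fun n : ℕ => g ^ (n + 1))
      {z : ℂ | ∃ n : ℕ, 1 ≤ n ∧ z = Complex.exp ((θ : ℂ) * Complex.I) ^ n * w₀} := by
    rintro _ ⟨n, rfl⟩
    refine ⟨n + 1, Nat.le_add_left 1 n, ?_⟩
    have hcp : ((g ^ (n + 1) : Circle) : ℂ) = ((g : ℂ)) ^ (n + 1) :=
      map_pow Circle.coeHom g (n + 1)
    show w₀ * ((g ^ (n + 1) : Circle) : ℂ) = _
    rw [hcp]
    simp only [hg, Circle.coe_exp]
    ring
  have := map_mem_closure hc hucl hmaps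
  simpa [hu, mul_div_cancel₀ _ hw₀] using this

end Stmt19Aux

/-- `f` elliptic with fixed points `α ≠ β`, conjugate via
`h(z) = (z - β)/(z - α)` to an irrational rotation `z ↦ e^{iθ} z`. If `b₀ ∉ {α, β}` does
not lie on the invariant extended line (`|h(b₀)| ≠ 1`), then the orbit `{fⁿ(b₀) : n ≥ 1}`
is dense in the circle `h⁻¹(C_r)` with `r = |h(b₀)|` (`r ≠ 0, 1`), and this circle has
positive distance from the invariant line `ℓ = {z : |z - α| = |z - β|}`. -/
theorem stmt19 (a b c d : ℂ) (hc : c ≠ 0) (hdet : a * d - b * c = 1)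
    (him : (a + d).im = 0) (h1 : -2 < (a + d).re) (h2 : (a + d).re < 2)
    (α β : ℂ) (hαβ : α ≠ β)
    (hα : c * α ^ 2 - (a - d) * α - b = 0)
    (hβ : c * β ^ 2 - (a - d) * β - b = 0)
    (θ : ℝ) (hirr : Irrational (θ / (2 * Real.pi)))
    (hconj : ∀ z : OnePoint ℂ,
      mob 1 (-β) 1 (-α) (mob a b c d z) =
        mob (Complex.exp ((θ : ℂ) * Complex.I)) 0 0 1 (mob 1 (-β) 1 (-α) z))
    (b₀ : ℂ) (hb₀α : b₀ ≠ α) (hb₀β : b₀ ≠ β)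
    (hline : ‖(b₀ - β) / (b₀ - α)‖ ≠ 1) :
    (‖(b₀ - β) / (b₀ - α)‖ ≠ 0) ∧
    (∀ y : ℂ, y ≠ α →
      ‖(y - β) / (y - α)‖ = ‖(b₀ - β) / (b₀ - α)‖ →
      y ∈ closure {w : ℂ | ∃ n : ℕ, 1 ≤ n ∧
        (mob a b c d)^[n] ((b₀ : OnePoint ℂ)) = (w : OnePoint ℂ)}) ∧
    (∃ L > (0 : ℝ), ∀ x : ℂ, x ≠ α →
      ‖(x - β) / (x - α)‖ = ‖(b₀ - β) / (b₀ - α)‖ →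
      ∀ y : ℂ, ‖y - α‖ = ‖y - β‖ → L ≤ dist x y) := by
  have hbα : b₀ - α ≠ 0 := sub_ne_zero.2 hb₀α
  have hbβ : b₀ - β ≠ 0 := sub_ne_zero.2 hb₀β
  set w₀ : ℂ := (b₀ - β) / (b₀ - α) with hw₀def
  have hw₀ : w₀ ≠ 0 := div_ne_zero hbβ hbα
  set r : ℝ := ‖w₀‖ with hrdef
  have hr0 : r ≠ 0 := by simpa [hrdef] using hw₀
  have hr1 : r ≠ 1 := hline
  set E : ℂ := Complex.exp ((θ : ℂ) * Complex.I) with hE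
  have hEabs : ‖E‖ = 1 := Complex.norm_exp_ofReal_mul_I θ
  set ginv : ℂ → ℂ := fun w => (α * w - β) / (w - 1) with hginvdef
  -- the rotation iterated
  have hR : ∀ (n : ℕ) (w : ℂ),
      (mob E 0 0 1)^[n] (w : OnePoint ℂ) = ((E ^ n * w : ℂ) : OnePoint ℂ) := by
    intro n
    induction n with
    | zero => intro w; simp
    | succ n ih =>
      intro w
      rw [Function.iterate_succ_apply, mob_coe_ne E 0 0 1 w (by simp), ih]
      congr 1
      field_simp
      ring
  -- the conjugation iterated
  have hA : ∀ (n : ℕ) (z : OnePoint ℂ),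
      mob 1 (-β) 1 (-α) ((mob a b c d)^[n] z) =
        (mob E 0 0 1)^[n] (mob 1 (-β) 1 (-α) z) := by
    intro n
    induction n with
    | zero => intro z; simp
    | succ n ih =>
      intro z
      rw [Function.iterate_succ_apply', Function.iterate_succ_apply', hconj, ih]
  have hHb : mob 1 (-β) 1 (-α) (b₀ : OnePoint ℂ) = (w₀ : OnePoint ℂ) := by
    rw [mob_coe_ne 1 (-β) 1 (-α) b₀ (by simpa [sub_eq_add_neg] using hbα)]
    congr 1
    rw [hw₀def]
    ring_nf
  -- the explicit orbit formula
  have horb : ∀ n : ℕ, (mob a b c d)^[n] (b₀ : OnePoint ℂ) =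
      ((ginv (E ^ n * w₀) : ℂ) : OnePoint ℂ) := by
    intro n
    have h1' : mob 1 (-β) 1 (-α) ((mob a b c d)^[n] (b₀ : OnePoint ℂ)) =
        ((E ^ n * w₀ : ℂ) : OnePoint ℂ) := by
      rw [hA, hHb, hR]
    set t : ℂ := E ^ n * w₀ with ht
    have habst : ‖t‖ = r := by
      rw [ht, norm_mul, norm_pow, hEabs, one_pow, one_mul, hrdef]
    have ht1 : t - 1 ≠ 0 := by
      intro h
      rw [sub_eq_zero] at h
      rw [h] at habst
      simp at habst
      exact hr1 habst.symm
    cases hFn : (mob a b c d)^[n] (b₀ : OnePoint ℂ) with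
    | infty =>
      exfalso
      rw [hFn] at h1'
      rw [mob_infty_ne 1 (-β) 1 (-α) one_ne_zero] at h1'
      have h11 : (1 : ℂ) / 1 = t := OnePoint.coe_injective h1'
      rw [div_one] at h11
      exact ht1 (by rw [← h11]; ring)
    | coe z =>
      have hzz : (mob a b c d)^[n] (b₀ : OnePoint ℂ) = ((z : ℂ) : OnePoint ℂ) := hFn
      rw [hzz] at h1'
      by_cases hzα : (1 : ℂ) * z + -α = 0
      · rw [mob_coe_eq 1 (-β) 1 (-α) z hzα] at h1'
        exact absurd h1' (OnePoint.infty_ne_coe _)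
      · rw [mob_coe_ne 1 (-β) 1 (-α) z hzα] at h1'
        have heq : (1 * z + -β) / (1 * z + -α) = t := OnePoint.coe_injective h1'
        have heq' : z - β = t * (z - α) := by
          have h := (div_eq_iff hzα).1 heq
          linear_combination h
        have hzval : z = ginv t := by
          rw [hginvdef]
          show z = (α * t - β) / (t - 1)
          rw [eq_div_iff ht1]
          linear_combination (-1 : ℂ) * heq'
        exact congrArg (fun w : ℂ => (w : OnePoint ℂ)) hzval
  refine ⟨hr0, ?_, ?_⟩
  · -- density
    intro y hyα hyr
    have hyα' : y - α ≠ 0 := sub_ne_zero.2 hyα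
    set hy : ℂ := (y - β) / (y - α) with hhy
    have hy1 : hy - 1 ≠ 0 := by
      intro h
      rw [sub_eq_zero, hhy, div_eq_one_iff_eq hyα'] at h
      exact hαβ (by linear_combination h)
    have hycl : hy ∈ closure {z : ℂ | ∃ n : ℕ, 1 ≤ n ∧ z = E ^ n * w₀} := by
      have := dense_orbit_sphere hirr w₀ hw₀ hy (by rw [hyr, hrdef])
      rwa [← hE] at this
    have hcont : ContinuousAt ginv hy := by
      rw [hginvdef]
      exact ContinuousAt.div (by fun_prop) (by fun_prop) hy1
    have himg := mem_closure_image hcont hycl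
    have hsub2 : ginv '' {z : ℂ | ∃ n : ℕ, 1 ≤ n ∧ z = E ^ n * w₀} ⊆
        {w : ℂ | ∃ n : ℕ, 1 ≤ n ∧
          (mob a b c d)^[n] ((b₀ : OnePoint ℂ)) = (w : OnePoint ℂ)} := by
      rintro _ ⟨z, ⟨n, hn, rfl⟩, rfl⟩
      exact ⟨n, hn, horb n⟩
    have hmem2 := closure_mono hsub2 himg
    have hyeq : ginv hy = y := by
      rw [hginvdef]
      show (α * hy - β) / (hy - 1) = y
      rw [div_eq_iff hy1, hhy]
      field_simp
      ring
    rwa [hyeq] at hmem2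
  · -- positive distance
    set K : Set ℂ := {x : ℂ | ‖x - β‖ = r * ‖x - α‖} with hKdef
    set Lset : Set ℂ := {y : ℂ | ‖y - α‖ = ‖y - β‖} with hLdef
    have hKmem : ∀ x : ℂ, x ≠ α → ‖(x - β) / (x - α)‖ = r → x ∈ K := by
      intro x hxα hxr
      have hxα' : ‖x - α‖ ≠ 0 := by
        rw [ne_eq, norm_eq_zero, sub_eq_zero]; exact hxα
      rw [norm_div] at hxr
      exact (div_eq_iff hxα').1 hxr
    have hb₀K : b₀ ∈ K := hKmem b₀ hb₀α hrdef.symm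
    have hKclosed : IsClosed K := by
      apply isClosed_eq
      · exact continuous_norm.comp (continuous_id.sub continuous_const)
      · exact continuous_const.mul
          (continuous_norm.comp (continuous_id.sub continuous_const))
    have habs1 : (0 : ℝ) < |r - 1| := by
      rw [abs_pos, sub_ne_zero]; exact hr1
    have hKcomp : IsCompact K := by
      refine (isCompact_closedBall α (‖α - β‖ / |r - 1|)).of_isClosed_subset
        hKclosed ?_
      intro x hx
      simp only [hKdef, Set.mem_setOf_eq] at hx
      rw [Metric.mem_closedBall, Complex.dist_eq, le_div_iff₀ habs1]
      have hs : (0 : ℝ) ≤ ‖x - α‖ := norm_nonneg _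
      have h5 : ‖x - α‖ * |r - 1| =
          |‖x - β‖ - ‖x - α‖| := by
        rw [hx, show r * ‖x - α‖ - ‖x - α‖ =
          (r - 1) * ‖x - α‖ by ring, abs_mul, _root_.abs_of_nonneg hs, mul_comm]
      have h3 : |‖x - β‖ - ‖x - α‖| ≤
          ‖(x - β) - (x - α)‖ := by
        simpa using abs_norm_sub_norm_le (x - β) (x - α)
      have h4 : (x - β) - (x - α) = α - β := by ring
      rw [h5]
      rw [h4] at h3
      exact h3
    have hLclosed : IsClosed Lset := by
      apply isClosed_eq
      · exact continuous_norm.comp (continuous_id.sub continuous_const)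
      · exact continuous_norm.comp (continuous_id.sub continuous_const)
    have hLne : Lset.Nonempty := by
      refine ⟨(α + β) / 2, ?_⟩
      show ‖(α + β) / 2 - α‖ = ‖(α + β) / 2 - β‖
      have e1 : (α + β) / 2 - α = -((α + β) / 2 - β) := by ring
      rw [e1, norm_neg]
    obtain ⟨x₀, hx₀K, hx₀min⟩ := hKcomp.exists_isMinOn ⟨b₀, hb₀K⟩
      ((Metric.continuous_infDist_pt Lset).continuousOn)
    have hx₀pos : 0 < Metric.infDist x₀ Lset := by
      rw [← hLclosed.notMem_iff_infDist_pos hLne]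
      intro hx₀L
      simp only [hKdef, Set.mem_setOf_eq] at hx₀K
      simp only [hLdef, Set.mem_setOf_eq] at hx₀L
      have hne0 : ‖x₀ - α‖ ≠ 0 := by
        intro h0
        rw [norm_eq_zero, sub_eq_zero] at h0
        subst h0
        rw [sub_self, norm_zero] at hx₀L
        exact hαβ (by rwa [eq_comm, norm_eq_zero, sub_eq_zero] at hx₀L)
      have hre : ‖x₀ - α‖ = r * ‖x₀ - α‖ := by
        rw [← hx₀K, ← hx₀L]
      exact hr1 (mul_right_cancel₀ hne0 (by rw [one_mul]; exact hre.symm))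
    refine ⟨Metric.infDist x₀ Lset, hx₀pos, ?_⟩
    intro x hxα hxr y hyL
    have hxK : x ∈ K := hKmem x hxα hxr
    calc Metric.infDist x₀ Lset ≤ Metric.infDist x Lset := hx₀min hxK
      _ ≤ dist x y := Metric.infDist_le_dist_of_mem hyL
end
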